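/- Let $G \in \mathbb{R}^{n \times n}$ be symmetric positive semidefinite, $b, \bar{b} \in \mathbb{R}^n$, $\gamma \ge 2$, $d > 0$, and let $\hat{a}$ minimize $a \mapsto a^\top G a - 2 a^\top b + \gamma d |a|_1$. Fix $a \in \mathbb{R}^n$ with support $S(a) = \{\varphi : a_\varphi \ne 0\}$. Suppose (i) $(\hat{a}-a)^\top(G\hat{a} - \bar{b}) \ge 0$ and (ii) $|b_\varphi - \bar{b}_\varphi| \le d$ for all $\varphi$. Then $|\hat{a}_{S(a)^c}|_1 \le \frac{\gamma+2}{\gamma-2} |\hat{a}_{S(a)} - a_{S(a)}|_1$ (interpreting the right side as valid when $\gamma > 2$). -/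

import Mathlib

open Matrix

open Classical in
/-- The cone condition for the Lasso minimizer (Lemma 2). -/
theorem stmt7 {n : ℕ} (G : Matrix (Fin n) (Fin n) ℝ) (hsym : G.IsSymm)
    (hpsd : ∀ u : Fin n → ℝ, 0 ≤ u ⬝ᵥ (G *ᵥ u))
    (b bbar : Fin n → ℝ) (γ d : ℝ) (hγ : 2 < γ) (hd : 0 < d)
    (ahat : Fin n → ℝ)
    (hmin : ∀ a : Fin n → ℝ,
      ahat ⬝ᵥ (G *ᵥ ahat) - 2 * (ahat ⬝ᵥ b) + γ * d * (∑ i, |ahat i|)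
        ≤ a ⬝ᵥ (G *ᵥ a) - 2 * (a ⬝ᵥ b) + γ * d * (∑ i, |a i|))
    (a : Fin n → ℝ)
    (hi : 0 ≤ (ahat - a) ⬝ᵥ (G *ᵥ ahat - bbar))
    (hii : ∀ i, |b i - bbar i| ≤ d) :
    ∑ i ∈ Finset.univ.filter (fun i => a i = 0), |ahat i|
      ≤ (γ + 2) / (γ - 2) * ∑ i ∈ Finset.univ.filter (fun i => a i ≠ 0), |ahat i - a i| := by
  have symmGd : ∀ u v : Fin n → ℝ, u ⬝ᵥ (G *ᵥ v) = v ⬝ᵥ (G *ᵥ u) := by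
    intro u v
    rw [dotProduct_mulVec, ← mulVec_transpose, hsym.eq, dotProduct_comm]
  set D : Fin n → ℝ := a - ahat with hDdef
  set Sh : ℝ := ∑ i, |ahat i| with hSh
  set Sa : ℝ := ∑ i, |a i| with hSa
  set Q : ℝ := D ⬝ᵥ (G *ᵥ D) with hQ
  have hQ0 : 0 ≤ Q := hpsd D
  -- per-t inequality
  have quad : ∀ t : ℝ, 0 < t → t ≤ 1 →
      0 ≤ 2 * (D ⬝ᵥ (G *ᵥ ahat)) - 2 * (D ⬝ᵥ b) + t * Q + γ * d * (Sa - Sh) := by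
    intro t ht ht1
    have h1 := hmin (ahat + t • D)
    have hquad : (ahat + t • D) ⬝ᵥ (G *ᵥ (ahat + t • D))
        = ahat ⬝ᵥ (G *ᵥ ahat) + 2 * t * (D ⬝ᵥ (G *ᵥ ahat)) + t^2 * Q := by
      simp only [mulVec_add, mulVec_smul, dotProduct_add, add_dotProduct,
        dotProduct_smul, smul_dotProduct, smul_eq_mul, hQ]
      rw [symmGd ahat D]
      ring
    have hlin : (ahat + t • D) ⬝ᵥ b = ahat ⬝ᵥ b + t * (D ⬝ᵥ b) := by
      simp [add_dotProduct, smul_dotProduct, smul_eq_mul]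
    have habs : (∑ i, |ahat i + t * D i|) ≤ (1 - t) * Sh + t * Sa := by
      rw [hSh, hSa, Finset.mul_sum, Finset.mul_sum, ← Finset.sum_add_distrib]
      refine Finset.sum_le_sum fun i _ => ?_
      have heq : ahat i + t * D i = (1 - t) * ahat i + t * a i := by
        simp only [hDdef, Pi.sub_apply]; ring
      rw [heq]
      calc |(1 - t) * ahat i + t * a i| ≤ |(1 - t) * ahat i| + |t * a i| := abs_add_le _ _
        _ = (1 - t) * |ahat i| + t * |a i| := by
            rw [abs_mul, abs_mul, abs_of_nonneg (by linarith), abs_of_nonneg ht.le]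
    have h2 : ahat ⬝ᵥ (G *ᵥ ahat) - 2 * (ahat ⬝ᵥ b) + γ * d * Sh
        ≤ ahat ⬝ᵥ (G *ᵥ ahat) + 2 * t * (D ⬝ᵥ (G *ᵥ ahat)) + t^2 * Q
          - 2 * (ahat ⬝ᵥ b + t * (D ⬝ᵥ b)) + γ * d * ((1 - t) * Sh + t * Sa) := by
      calc ahat ⬝ᵥ (G *ᵥ ahat) - 2 * (ahat ⬝ᵥ b) + γ * d * Sh
          ≤ (ahat + t • D) ⬝ᵥ (G *ᵥ (ahat + t • D)) - 2 * ((ahat + t • D) ⬝ᵥ b)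
            + γ * d * (∑ i, |ahat i + t * D i|) := by
            simpa [Pi.add_apply, Pi.smul_apply, smul_eq_mul] using h1
        _ ≤ _ := by
            rw [hquad, hlin]
            have hγd : 0 < γ * d := by positivity
            nlinarith [habs]
    have h3 : 0 ≤ t * (2 * (D ⬝ᵥ (G *ᵥ ahat)) - 2 * (D ⬝ᵥ b) + t * Q + γ * d * (Sa - Sh)) := by
      nlinarith [h2]
    nlinarith [h3, ht]
  -- let t → 0
  have key : 0 ≤ 2 * (D ⬝ᵥ (G *ᵥ ahat)) - 2 * (D ⬝ᵥ b) + γ * d * (Sa - Sh) := by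
    set c := 2 * (D ⬝ᵥ (G *ᵥ ahat)) - 2 * (D ⬝ᵥ b) + γ * d * (Sa - Sh) with hc
    have : -c ≤ 0 := by
      refine le_of_forall_pos_le_add fun ε hε => ?_
      have htpos : 0 < min 1 (ε / (Q + 1)) := lt_min one_pos (by positivity)
      have h := quad (min 1 (ε / (Q + 1))) htpos (min_le_left _ _)
      have h2 : min 1 (ε / (Q + 1)) * Q ≤ ε := by
        calc min 1 (ε / (Q + 1)) * Q ≤ (ε / (Q + 1)) * Q :=
              mul_le_mul_of_nonneg_right (min_le_right _ _) hQ0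
          _ ≤ ε := by
              rw [div_mul_eq_mul_div, div_le_iff₀ (by linarith)]
              nlinarith
      linarith [h, h2, hc.le, hc.ge]
    linarith
  -- bound the noise term
  set SD : ℝ := ∑ i, |ahat i - a i| with hSD
  have noise : -(d * SD) ≤ (ahat - a) ⬝ᵥ (bbar - b) := by
    have hterm : ∀ i ∈ Finset.univ, -(d * |ahat i - a i|) ≤ (ahat i - a i) * (bbar i - b i) := by
      intro i _
      have h1 : |(ahat i - a i) * (bbar i - b i)| ≤ |ahat i - a i| * d := by
        rw [abs_mul]
        exact mul_le_mul_of_nonneg_left (by rw [abs_sub_comm]; exact hii i) (abs_nonneg _)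
      have h2 := neg_abs_le ((ahat i - a i) * (bbar i - b i))
      nlinarith
    calc -(d * SD) = ∑ i, -(d * |ahat i - a i|) := by
          rw [hSD, Finset.mul_sum]; exact (Finset.sum_neg_distrib _).symm
      _ ≤ ∑ i, (ahat i - a i) * (bbar i - b i) := Finset.sum_le_sum hterm
      _ = (ahat - a) ⬝ᵥ (bbar - b) := by simp [dotProduct]
  -- combine: γ * Sh ≤ γ * Sa + 2 * SD
  have hi' : 0 ≤ (ahat - a) ⬝ᵥ (G *ᵥ ahat) - (ahat - a) ⬝ᵥ bbar := by
    rw [← dotProduct_sub]; exact hi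
  have noise' : -(d * SD) ≤ (ahat - a) ⬝ᵥ bbar - (ahat - a) ⬝ᵥ b := by
    rw [← dotProduct_sub]; exact noise
  have hDneg1 : D ⬝ᵥ (G *ᵥ ahat) = -((ahat - a) ⬝ᵥ (G *ᵥ ahat)) := by
    rw [← neg_dotProduct]; congr 1; simp [hDdef]
  have hDneg2 : D ⬝ᵥ b = -((ahat - a) ⬝ᵥ b) := by
    rw [← neg_dotProduct]; congr 1; simp [hDdef]
  rw [hDneg1, hDneg2] at key
  have hmain : γ * Sh ≤ γ * Sa + 2 * SD := by
    have hdmain : d * (γ * Sh) ≤ d * (γ * Sa + 2 * SD) := by nlinarith [key, hi', noise']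
    exact le_of_mul_le_mul_left hdmain hd
  -- split the sums
  set S0 := Finset.univ.filter (fun i => a i = 0) with hS0
  set S1 := Finset.univ.filter (fun i => a i ≠ 0) with hS1
  have hsplit : ∀ f : Fin n → ℝ, (∑ i, f i) = (∑ i ∈ S0, f i) + (∑ i ∈ S1, f i) := by
    intro f
    rw [hS0, hS1]
    exact (Finset.sum_filter_add_sum_filter_not Finset.univ _ f).symm
  have hSh' : Sh = (∑ i ∈ S0, |ahat i|) + (∑ i ∈ S1, |ahat i|) := hsplit _
  have hSa' : Sa = (∑ i ∈ S1, |a i|) := by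
    rw [hSa, hsplit]
    have : (∑ i ∈ S0, |a i|) = 0 := by
      refine Finset.sum_eq_zero fun i hiS => ?_
      rw [hS0, Finset.mem_filter] at hiS
      simp [hiS.2]
    rw [this, zero_add]
  have hSD' : SD = (∑ i ∈ S0, |ahat i|) + (∑ i ∈ S1, |ahat i - a i|) := by
    rw [hSD, hsplit]
    congr 1
    refine Finset.sum_congr rfl fun i hiS => ?_
    rw [hS0, Finset.mem_filter] at hiS
    rw [hiS.2, sub_zero]
  have htri : (∑ i ∈ S1, |a i|) ≤ (∑ i ∈ S1, |ahat i|) + (∑ i ∈ S1, |ahat i - a i|) := by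
    rw [← Finset.sum_add_distrib]
    refine Finset.sum_le_sum fun i _ => ?_
    have := abs_sub_abs_le_abs_sub (a i) (ahat i)
    rw [abs_sub_comm] at this
    linarith
  have htri' : γ * (∑ i ∈ S1, |a i|)
      ≤ γ * ((∑ i ∈ S1, |ahat i|) + (∑ i ∈ S1, |ahat i - a i|)) :=
    mul_le_mul_of_nonneg_left htri (by linarith)
  rw [div_mul_eq_mul_div, le_div_iff₀ (by linarith : (0:ℝ) < γ - 2)]
  rw [hSh', hSa', hSD'] at hmain
  nlinarith [hmain, htri']
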